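/- Let α⃗ = (α₁,α₂) with α₁,α₂ > −1, let 1 < p ≤ q < ∞, and let μ be a positive measure on Π⁺×Π⁺ which is a (q/p, α⃗)-Carleson measure, i.e. there is C₀ > 0 with μ(Q_{I₁}×Q_{I₂}) ≤ C₀ (V_{α₁}(Q_{I₁}) V_{α₂}(Q_{I₂}))^{q/p} for all intervals I₁, I₂. Then there exists a constant C > 0 such that for every f ∈ L^p(Π⁺×Π⁺, dV_{α⃗}), ∫_{Π⁺×Π⁺} (M_{α⃗} f)^q dμ ≤ C (∫_{Π⁺×Π⁺} |f|^p dV_{α⃗})^{q/p}. -/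

import Mathlib

open MeasureTheory Set
open scoped ENNReal NNReal

noncomputable section

/-- The upper half-plane `Π⁺`. -/
def UHP : Set ℂ := {z : ℂ | 0 < z.im}

/-- The weighted measure `dV_α(x+iy) = y^α dx dy` on the upper half-plane. -/
def Vm (α : ℝ) : Measure ℂ :=
  (volume.restrict UHP).withDensity fun z => ENNReal.ofReal (z.im ^ α)

/-- The Carleson square `Q_I = {x+iy : x ∈ I, 0 < y < |I|}` of the interval `I = (a,b)`. -/
def carlSq (a b : ℝ) : Set ℂ :=
  {z : ℂ | z.re ∈ Set.Ioo a b ∧ z.im ∈ Set.Ioo 0 (b - a)}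

/-- The strong maximal function `M_{α⃗} f(z) = sup_R χ_{Q_R}(z) (1/V_{α⃗}(Q_R)) ∫_{Q_R} |f| dV_{α⃗}`,
the supremum being over all rectangles `R = I₁×I₂ ⊂ ℝ²`. -/
def strongMaxFn (α₁ α₂ : ℝ) (f : ℂ × ℂ → ℂ) (z : ℂ × ℂ) : ℝ≥0∞ :=
  ⨆ (a₁ : ℝ) (b₁ : ℝ) (a₂ : ℝ) (b₂ : ℝ) (_ : a₁ < b₁) (_ : a₂ < b₂)
    (_ : z ∈ carlSq a₁ b₁ ×ˢ carlSq a₂ b₂),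
    (∫⁻ w in carlSq a₁ b₁ ×ˢ carlSq a₂ b₂, (‖f w‖₊ : ℝ≥0∞) ∂((Vm α₁).prod (Vm α₂))) /
      ((Vm α₁).prod (Vm α₂)) (carlSq a₁ b₁ ×ˢ carlSq a₂ b₂)

instance Vm.instSFinite (α : ℝ) : SFinite (Vm α) := by unfold Vm; infer_instance


namespace SMCE

lemma measurableSet_UHP : MeasurableSet UHP :=
  measurableSet_lt measurable_const Complex.measurable_im

lemma carlSq_eq_preimage (a b : ℝ) :
    carlSq a b = Complex.measurableEquivRealProd ⁻¹' (Ioo a b ×ˢ Ioo 0 (b - a)) := by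
  ext z
  simp [carlSq, Complex.measurableEquivRealProd_apply, Set.mem_prod]

lemma measurableSet_carlSq (a b : ℝ) : MeasurableSet (carlSq a b) := by
  rw [carlSq_eq_preimage]
  exact Complex.measurableEquivRealProd.measurable (measurableSet_Ioo.prod measurableSet_Ioo)

lemma carlSq_subset_UHP (a b : ℝ) : carlSq a b ⊆ UHP := fun _ hz => hz.2.1

lemma measurable_dens (α : ℝ) : Measurable fun z : ℂ => ENNReal.ofReal (z.im ^ α) :=
  (Complex.measurable_im.pow measurable_const).ennreal_ofReal

lemma lintegral_im_rpow_carlSq {γ : ℝ} (hγ : -1 < γ) {a b : ℝ} (hab : a < b) :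
    ∫⁻ z in carlSq a b, ENNReal.ofReal (z.im ^ γ) ∂volume
      = ENNReal.ofReal ((b - a) ^ (γ + 2) / (γ + 1)) := by
  have hl : 0 < b - a := sub_pos.2 hab
  have hγ1 : 0 < γ + 1 := by linarith
  have h1 : ∫⁻ z in carlSq a b, ENNReal.ofReal (z.im ^ γ) ∂volume
      = ∫⁻ p in Ioo a b ×ˢ Ioo 0 (b - a), ENNReal.ofReal (p.2 ^ γ)
          ∂(volume : Measure (ℝ × ℝ)) := by
    rw [carlSq_eq_preimage]
    exact Complex.volume_preserving_equiv_real_prod.setLIntegral_comp_preimage_emb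
      Complex.measurableEquivRealProd.measurableEmbedding
      (fun p => ENNReal.ofReal (p.2 ^ γ)) (Ioo a b ×ˢ Ioo 0 (b - a))
  have h2 : ∫⁻ y in Ioo (0:ℝ) (b - a), ENNReal.ofReal (y ^ γ) ∂volume
      = ENNReal.ofReal ((b - a) ^ (γ + 1) / (γ + 1)) := by
    rw [setLIntegral_congr Ioo_ae_eq_Ioc]
    have hint : IntegrableOn (fun y : ℝ => y ^ γ) (Ioc 0 (b - a)) volume :=
      (intervalIntegrable_iff_integrableOn_Ioc_of_le hl.le).mp
        (intervalIntegral.intervalIntegrable_rpow' hγ (a := 0) (b := b - a))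
    rw [← ofReal_integral_eq_lintegral_ofReal hint ?nn]
    case nn =>
      filter_upwards [ae_restrict_mem measurableSet_Ioc] with y hy
      exact Real.rpow_nonneg hy.1.le _
    congr 1
    rw [← intervalIntegral.integral_of_le hl.le, integral_rpow (Or.inl hγ),
      Real.zero_rpow (by positivity)]
    ring
  have hmeas : Measurable fun p : ℝ × ℝ => ENNReal.ofReal (p.2 ^ γ) :=
    ((measurable_snd.pow measurable_const).ennreal_ofReal : Measurable fun p : ℝ × ℝ => ENNReal.ofReal (p.2 ^ γ))
  rw [h1, MeasureTheory.Measure.volume_eq_prod, ← Measure.prod_restrict, lintegral_prod _ hmeas.aemeasurable]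
  simp only [h2, lintegral_const, Measure.restrict_apply_univ, Real.volume_Ioo]
  rw [← ENNReal.ofReal_mul (by positivity)]
  congr 1
  rw [div_mul_eq_mul_div, ← Real.rpow_add_one hl.ne']
  ring_nf

lemma Vm_carlSq {α : ℝ} (hα : -1 < α) {a b : ℝ} (hab : a < b) :
    Vm α (carlSq a b) = ENNReal.ofReal ((b - a) ^ (α + 2) / (α + 1)) := by
  rw [Vm, withDensity_apply _ (measurableSet_carlSq a b),
    Measure.restrict_restrict (measurableSet_carlSq a b),
    inter_eq_self_of_subset_left (carlSq_subset_UHP a b)]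
  exact lintegral_im_rpow_carlSq hα hab

lemma setLIntegral_Vm (α : ℝ) {S : Set ℂ} (hS : MeasurableSet S) (hSU : S ⊆ UHP)
    {g : ℂ → ℝ≥0∞} (hg : Measurable g) :
    ∫⁻ z in S, g z ∂(Vm α) = ∫⁻ z in S, ENNReal.ofReal (z.im ^ α) * g z ∂volume := by
  rw [Vm, restrict_withDensity hS,
    lintegral_withDensity_eq_lintegral_mul _ (measurable_dens α) hg,
    Measure.restrict_restrict hS, inter_eq_self_of_subset_left hSU]
  rfl


/-! ### The double-dyadic family of intervals `(m 2^k, (m+2) 2^k)` -/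

def dlo (n : ℤ × ℤ) : ℝ := (n.2 : ℝ) * 2 ^ n.1
def dhi (n : ℤ × ℤ) : ℝ := ((n.2 : ℝ) + 2) * 2 ^ n.1

lemma two_zpow_pos (k : ℤ) : (0:ℝ) < 2 ^ k := zpow_pos (by norm_num) k

lemma dlo_lt_dhi (n : ℤ × ℤ) : dlo n < dhi n := by
  have := two_zpow_pos n.1
  unfold dlo dhi; nlinarith

def dSq (n : ℤ × ℤ) : Set ℂ := carlSq (dlo n) (dhi n)

lemma dlen (n : ℤ × ℤ) : dhi n - dlo n = 2 * 2 ^ n.1 := by unfold dlo dhi; ring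

lemma measurableSet_dSq (n : ℤ × ℤ) : MeasurableSet (dSq n) := measurableSet_carlSq _ _

lemma cover {a b : ℝ} (hab : a < b) :
    ∃ n : ℤ × ℤ, carlSq a b ⊆ dSq n ∧ 2 * (2:ℝ) ^ n.1 ≤ 4 * (b - a) := by
  have hl : 0 < b - a := sub_pos.2 hab
  set k : ℤ := ⌈Real.logb 2 (b - a)⌉ with hk
  have h2k : b - a ≤ 2 ^ k := by
    have h1 : Real.logb 2 (b - a) ≤ (k : ℝ) := Int.le_ceil _
    calc b - a = (2:ℝ) ^ Real.logb 2 (b - a) :=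
          (Real.rpow_logb two_pos (by norm_num) hl).symm
      _ ≤ (2:ℝ) ^ (k : ℝ) := Real.rpow_le_rpow_of_exponent_le one_le_two h1
      _ = 2 ^ k := Real.rpow_intCast 2 k
  have h2k' : (2:ℝ) ^ k ≤ 2 * (b - a) := by
    have h0 : (k:ℝ) ≤ (⌊Real.logb 2 (b - a)⌋ : ℤ) + 1 := by
      exact_mod_cast Int.ceil_le_floor_add_one _
    have h1 : (k : ℝ) ≤ Real.logb 2 (b - a) + 1 := by
      have h2 := Int.floor_le (Real.logb 2 (b - a))
      push_cast at h0
      linarith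
    calc (2:ℝ) ^ k = (2:ℝ) ^ (k:ℝ) := (Real.rpow_intCast 2 k).symm
      _ ≤ (2:ℝ) ^ (Real.logb 2 (b - a) + 1) := Real.rpow_le_rpow_of_exponent_le one_le_two h1
      _ = 2 * (b - a) := by
          rw [Real.rpow_add two_pos, Real.rpow_one, Real.rpow_logb two_pos (by norm_num) hl]
          ring
  set m : ℤ := ⌊a / 2 ^ k⌋ with hm
  have h2kpos := two_zpow_pos k
  have hm1 : (m : ℝ) * 2 ^ k ≤ a := by
    have h := Int.floor_le (a / 2 ^ k)
    calc (m:ℝ) * 2^k ≤ (a / 2^k) * 2^k := by nlinarith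
      _ = a := div_mul_cancel₀ a h2kpos.ne'
  have hm2 : a < ((m : ℝ) + 1) * 2 ^ k := by
    have h := Int.lt_floor_add_one (a / 2 ^ k)
    calc a = (a / 2^k) * 2^k := (div_mul_cancel₀ a h2kpos.ne').symm
      _ < ((m:ℝ)+1) * 2^k := by nlinarith
  refine ⟨(k, m), ?_, by nlinarith⟩
  intro z hz
  obtain ⟨⟨hre1, hre2⟩, him1, him2⟩ := hz
  refine ⟨⟨?_, ?_⟩, ?_, ?_⟩
  · exact lt_of_le_of_lt hm1 hre1
  · show z.re < dhi (k, m)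
    have hb : b ≤ a + 2 ^ k := by linarith
    unfold dhi
    calc z.re < b := hre2
      _ < ((m:ℝ)+2) * 2^k := by push_cast; nlinarith
  · exact him1
  · show z.im < dhi (k, m) - dlo (k, m)
    rw [dlen]
    calc z.im < b - a := him2
      _ ≤ 2^k := h2k
      _ < 2 * 2^k := by nlinarith

lemma Vm_dSq {α : ℝ} (hα : -1 < α) (n : ℤ × ℤ) :
    Vm α (dSq n) = ENNReal.ofReal ((2 * 2 ^ n.1 : ℝ) ^ (α + 2) / (α + 1)) := by
  rw [dSq, Vm_carlSq hα (dlo_lt_dhi n), dlen]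

lemma Vm_dSq_pos {α : ℝ} (hα : -1 < α) (n : ℤ × ℤ) :
    0 < (2 * 2 ^ n.1 : ℝ) ^ (α + 2) / (α + 1) := by
  have h1 := two_zpow_pos n.1
  have h2 : (0:ℝ) < 2 * 2 ^ n.1 := by linarith
  have h3 : (0:ℝ) < α + 1 := by linarith
  exact div_pos (Real.rpow_pos_of_pos h2 _) h3

lemma Vcomp {α : ℝ} (hα : -1 < α) {a b : ℝ} (hab : a < b) {k m : ℤ}
    (hsz : 2 * (2:ℝ) ^ k ≤ 4 * (b - a)) :
    Vm α (dSq (k, m)) ≤ ENNReal.ofReal ((4:ℝ) ^ (α + 2)) * Vm α (carlSq a b) := by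
  have hl : 0 < b - a := sub_pos.2 hab
  have hα1 : (0:ℝ) < α + 1 := by linarith
  have h1 := two_zpow_pos k
  rw [Vm_dSq hα, Vm_carlSq hα hab, ← ENNReal.ofReal_mul (by positivity)]
  apply ENNReal.ofReal_le_ofReal
  have hnum : (2 * (2:ℝ)^k) ^ (α+2) ≤ (4*(b-a)) ^ (α+2) :=
    Real.rpow_le_rpow (by positivity) hsz (by linarith)
  calc (2 * (2:ℝ)^k) ^ (α+2) / (α+1) ≤ (4*(b-a)) ^ (α+2) / (α+1) := by gcongr
    _ = 4 ^ (α+2) * ((b-a) ^ (α+2) / (α+1)) := by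
        rw [Real.mul_rpow (by norm_num) hl.le]; ring


lemma isup_rpow_le_tsum {ι : Type*} [Countable ι] (u : ι → ℝ≥0∞) {q : ℝ} (hq : 0 < q) :
    (⨆ i, u i) ^ q ≤ ∑' i, (u i) ^ q := by
  have h1 : (⨆ i, u i) ≤ (∑' i, (u i) ^ q) ^ (1/q) := by
    refine iSup_le fun i => ?_
    have h2 : u i = ((u i) ^ q) ^ (1/q) := by
      rw [← ENNReal.rpow_mul, mul_one_div, div_self hq.ne', ENNReal.rpow_one]
    rw [h2]
    exact ENNReal.rpow_le_rpow (ENNReal.le_tsum i) (by positivity)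
  calc (⨆ i, u i) ^ q ≤ ((∑' i, (u i) ^ q) ^ (1/q)) ^ q := ENNReal.rpow_le_rpow h1 hq.le
    _ = ∑' i, (u i) ^ q := by
      rw [← ENNReal.rpow_mul, one_div, inv_mul_cancel₀ hq.ne', ENNReal.rpow_one]

lemma tsum_rpow_le {ι : Type*} (a : ι → ℝ≥0∞) {s : ℝ} (hs : 1 ≤ s) :
    ∑' i, (a i) ^ s ≤ (∑' i, a i) ^ s := by
  have hs0 : 0 < s := lt_of_lt_of_le zero_lt_one hs
  by_cases htop : ∑' i, a i = ∞
  · rw [htop, ENNReal.top_rpow_of_pos hs0]; exact le_top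
  by_cases hzero : ∑' i, a i = 0
  · have h0 : ∀ i, a i = 0 := ENNReal.tsum_eq_zero.mp hzero
    have h1 : ∀ i, (a i) ^ s = 0 := fun i => by rw [h0 i, ENNReal.zero_rpow_of_pos hs0]
    rw [ENNReal.tsum_eq_zero.mpr h1]
    exact zero_le
  · calc ∑' i, (a i) ^ s
          ≤ ∑' i, (∑' j, a j) ^ (s - 1) * a i := by
          refine Summable.tsum_le_tsum (fun i => ?_) ENNReal.summable ENNReal.summable
          by_cases hi : a i = 0
          · simp [hi, ENNReal.zero_rpow_of_pos hs0]
          · have hit : a i ≠ ∞ := ne_top_of_le_ne_top htop (ENNReal.le_tsum i)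
            have h2 : (a i) ^ s = (a i) ^ (s-1) * (a i) ^ (1:ℝ) := by
              rw [← ENNReal.rpow_add _ _ hi hit]; norm_num
            rw [h2, ENNReal.rpow_one]
            exact mul_le_mul_left
              (ENNReal.rpow_le_rpow (ENNReal.le_tsum i) (by linarith)) _
      _ = (∑' j, a j) ^ (s - 1) * ∑' i, a i := ENNReal.tsum_mul_left
      _ = (∑' i, a i) ^ s := by
          have h3 : (∑' i, a i) ^ (s-1) * (∑' i, a i) ^ (1:ℝ) = (∑' i, a i) ^ s := by
            rw [← ENNReal.rpow_add _ _ hzero htop]; norm_num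
          rw [← h3, ENNReal.rpow_one]

lemma sumchi {c : ℝ} (hc : 0 < c) {z : ℂ} (hz : 0 < z.im) :
    ∑' n : ℤ × ℤ, (dSq n).indicator (fun _ => ENNReal.ofReal ((2 * 2 ^ n.1 : ℝ) ^ (-c))) z
      ≤ ENNReal.ofReal (z.im ^ (-c)) * (2 * (1 - ENNReal.ofReal ((2:ℝ) ^ (-c)))⁻¹) := by
  set y := z.im with hy
  set x := z.re with hx
  set k₀ : ℤ := ⌊Real.logb 2 y⌋ with hk₀
  set ρ : ℝ≥0∞ := ENNReal.ofReal ((2:ℝ) ^ (-c)) with hρ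
  -- 2^{k₀} ≤ y < 2 * 2^{k₀}
  have hyk1 : (2:ℝ) ^ (k₀:ℝ) ≤ y := by
    calc (2:ℝ) ^ (k₀:ℝ) ≤ (2:ℝ) ^ Real.logb 2 y :=
          Real.rpow_le_rpow_of_exponent_le one_le_two (Int.floor_le _)
      _ = y := Real.rpow_logb two_pos (by norm_num) hz
  have hyk2 : y < (2:ℝ) ^ ((k₀:ℝ) + 1) := by
    calc y = (2:ℝ) ^ Real.logb 2 y := (Real.rpow_logb two_pos (by norm_num) hz).symm
      _ < (2:ℝ) ^ ((k₀:ℝ) + 1) := by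
          apply Real.rpow_lt_rpow_of_exponent_lt one_lt_two
          have := Int.lt_floor_add_one (Real.logb 2 y)
          push_cast at this ⊢
          linarith
  -- per-scale bound
  have hstep : ∀ k : ℤ,
      (∑' m : ℤ, (dSq (k, m)).indicator
          (fun _ => ENNReal.ofReal ((2 * 2 ^ k : ℝ) ^ (-c))) z)
        ≤ ENNReal.ofReal (y ^ (-c)) * 2 *
            (if k₀ ≤ k then ρ ^ (k - k₀).toNat else 0) := by
    intro k
    by_cases hky : y < 2 * 2 ^ k
    · -- k₀ ≤ k
      have hk0k : k₀ ≤ k := by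
        by_contra hcon
        push_neg at hcon
        have h1 : (k:ℝ) + 1 ≤ (k₀:ℝ) := by exact_mod_cast hcon
        have h2 : (2:ℝ) ^ ((k:ℝ) + 1) ≤ (2:ℝ) ^ (k₀:ℝ) :=
          Real.rpow_le_rpow_of_exponent_le one_le_two h1
        have h3 : (2:ℝ) ^ ((k:ℝ) + 1) = 2 * 2 ^ k := by
          rw [Real.rpow_add two_pos, Real.rpow_one, Real.rpow_intCast]; ring
        rw [h3] at h2
        linarith
      set j : ℕ := (k - k₀).toNat with hj
      have hjz : (j : ℤ) = k - k₀ := Int.toNat_of_nonneg (by omega)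
      -- the coefficient bound
      have hck : ENNReal.ofReal ((2 * 2 ^ k : ℝ) ^ (-c))
          ≤ ENNReal.ofReal (y ^ (-c)) * ρ ^ j := by
        have h2j : (0:ℝ) < (2:ℝ) ^ (j:ℕ) := by positivity
        have hbase : (2:ℝ) ^ (j:ℕ) * y ≤ 2 * 2 ^ k := by
          have e1 : (2:ℝ) ^ (j:ℕ) * (2:ℝ) ^ ((k₀:ℝ)+1) = 2 * 2 ^ k := by
            have e2 : ((j:ℝ) + ((k₀:ℝ) + 1)) = (k:ℝ) + 1 := by
              have e3 : ((j:ℤ):ℝ) = (k:ℝ) - (k₀:ℝ) := by exact_mod_cast hjz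
              push_cast at e3
              linarith
            rw [← Real.rpow_natCast 2 j, ← Real.rpow_add two_pos, e2,
              Real.rpow_add two_pos, Real.rpow_one, Real.rpow_intCast]
            ring
          nlinarith [hyk2]
        have hreal : (2 * 2 ^ k : ℝ) ^ (-c) ≤ y ^ (-c) * ((2:ℝ) ^ (-c)) ^ j := by
          have h1 : (2 * 2 ^ k : ℝ) ^ (-c) ≤ ((2:ℝ) ^ (j:ℕ) * y) ^ (-c) :=
            Real.rpow_le_rpow_of_nonpos (by positivity) hbase (by linarith)
          have h2 : ((2:ℝ) ^ (j:ℕ) * y) ^ (-c) = ((2:ℝ) ^ (j:ℕ)) ^ (-c) * y ^ (-c) :=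
            Real.mul_rpow h2j.le hz.le
          have h3 : ((2:ℝ) ^ (j:ℕ)) ^ (-c) = ((2:ℝ) ^ (-c)) ^ (j:ℕ) := by
            rw [← Real.rpow_natCast 2 j, ← Real.rpow_natCast ((2:ℝ) ^ (-c)) j,
              ← Real.rpow_mul (by norm_num), ← Real.rpow_mul (by norm_num), mul_comm]
          calc (2 * 2 ^ k : ℝ) ^ (-c) ≤ ((2:ℝ) ^ (j:ℕ)) ^ (-c) * y ^ (-c) := by
                rw [← h2]; exact h1
            _ = y ^ (-c) * ((2:ℝ) ^ (-c)) ^ j := by rw [h3]; ring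
        calc ENNReal.ofReal ((2 * 2 ^ k : ℝ) ^ (-c))
            ≤ ENNReal.ofReal (y ^ (-c) * ((2:ℝ) ^ (-c)) ^ j) :=
              ENNReal.ofReal_le_ofReal hreal
          _ = ENNReal.ofReal (y ^ (-c)) * ρ ^ j := by
              rw [ENNReal.ofReal_mul (Real.rpow_nonneg hz.le _),
                ENNReal.ofReal_pow (Real.rpow_nonneg (by norm_num) _)]
      -- per-m analysis
      set M : ℤ := ⌊x / 2 ^ k⌋ with hM
      have hmem : ∀ m : ℤ, z ∈ dSq (k, m) → m = M - 1 ∨ m = M := by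
        intro m hmm
        obtain ⟨⟨hr1, hr2⟩, _, _⟩ := hmm
        have h2kpos := two_zpow_pos k
        have hd1 : (m:ℝ) < x / 2 ^ k := by
          rw [lt_div_iff₀ h2kpos]
          exact hr1
        have hd2 : x / 2 ^ k < (m:ℝ) + 2 := by
          rw [div_lt_iff₀ h2kpos]
          calc x < ((m:ℝ) + 2) * 2 ^ k := hr2
            _ = ((m:ℝ) + 2) * 2 ^ k := rfl
        have hmM : m ≤ M := Int.le_floor.mpr hd1.le
        have hMm : M ≤ m + 1 := by
          have h1 : (M:ℝ) ≤ x / 2 ^ k := Int.floor_le _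
          have h2 : (M:ℝ) < (m:ℝ) + 2 := lt_of_le_of_lt h1 hd2
          have : M < m + 2 := by exact_mod_cast h2
          omega
        omega
      have hterm : ∀ m : ℤ,
          (dSq (k, m)).indicator
              (fun _ => ENNReal.ofReal ((2 * 2 ^ k : ℝ) ^ (-c))) z
            ≤ (if m = M - 1 then ENNReal.ofReal (y ^ (-c)) * ρ ^ j else 0)
              + (if m = M then ENNReal.ofReal (y ^ (-c)) * ρ ^ j else 0) := by
        intro m
        by_cases hmm : z ∈ dSq (k, m)
        · rw [indicator_of_mem hmm]
          rcases hmem m hmm with h | h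
          · rw [if_pos h]
            exact le_add_right (le_trans hck (le_refl _))
          · rw [if_pos h]
            exact le_add_left (le_trans hck (le_refl _))
        · rw [indicator_of_notMem hmm]
          exact zero_le
      calc (∑' m : ℤ, (dSq (k, m)).indicator
              (fun _ => ENNReal.ofReal ((2 * 2 ^ k : ℝ) ^ (-c))) z)
          ≤ ∑' m : ℤ, ((if m = M - 1 then ENNReal.ofReal (y ^ (-c)) * ρ ^ j else 0)
              + (if m = M then ENNReal.ofReal (y ^ (-c)) * ρ ^ j else 0)) :=
            Summable.tsum_le_tsum hterm ENNReal.summable ENNReal.summable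
        _ = ENNReal.ofReal (y ^ (-c)) * ρ ^ j + ENNReal.ofReal (y ^ (-c)) * ρ ^ j := by
            rw [ENNReal.tsum_add, tsum_ite_eq, tsum_ite_eq]
        _ = ENNReal.ofReal (y ^ (-c)) * 2 * (if k₀ ≤ k then ρ ^ (k - k₀).toNat else 0) := by
            rw [if_pos hk0k]
            ring
    · -- no box at this scale contains z
      have hnone : ∀ m : ℤ, z ∉ dSq (k, m) := by
        intro m hmm
        obtain ⟨_, _, h2⟩ := hmm
        rw [dlen] at h2
        exact hky (lt_of_lt_of_le h2 (le_refl _))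
      have h0 : ∀ m : ℤ, (dSq (k, m)).indicator
          (fun _ => ENNReal.ofReal ((2 * 2 ^ k : ℝ) ^ (-c))) z = 0 :=
        fun m => indicator_of_notMem (hnone m) _
      rw [ENNReal.tsum_eq_zero.mpr h0]
      exact zero_le
  -- sum over scales
  calc ∑' n : ℤ × ℤ, (dSq n).indicator
        (fun _ => ENNReal.ofReal ((2 * 2 ^ n.1 : ℝ) ^ (-c))) z
      = ∑' k : ℤ, ∑' m : ℤ, (dSq (k, m)).indicator
          (fun _ => ENNReal.ofReal ((2 * 2 ^ k : ℝ) ^ (-c))) z := ENNReal.tsum_prod'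
    _ ≤ ∑' k : ℤ, ENNReal.ofReal (y ^ (-c)) * 2 *
          (if k₀ ≤ k then ρ ^ (k - k₀).toNat else 0) :=
        Summable.tsum_le_tsum hstep ENNReal.summable ENNReal.summable
    _ = ENNReal.ofReal (y ^ (-c)) * 2 *
          ∑' k : ℤ, (if k₀ ≤ k then ρ ^ (k - k₀).toNat else 0) := ENNReal.tsum_mul_left
    _ ≤ ENNReal.ofReal (y ^ (-c)) * (2 * (1 - ρ)⁻¹) := by
        have hgeo : ∑' k : ℤ, (if k₀ ≤ k then ρ ^ (k - k₀).toNat else 0) = (1 - ρ)⁻¹ := by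
          have hinj : Function.Injective (fun j : ℕ => k₀ + (j:ℤ)) := by
            intro a b h
            simpa using h
          rw [← Function.Injective.tsum_eq hinj ?hsupp]
          case hsupp =>
            intro kk hkk
            simp only [Function.mem_support] at hkk
            by_contra hr
            apply hkk
            rw [if_neg]
            intro hle
            exact hr ⟨(kk - k₀).toNat, by show k₀ + ((kk - k₀).toNat : ℤ) = kk; omega⟩
          have heval : ∀ j : ℕ, (if k₀ ≤ k₀ + (j:ℤ) then ρ ^ (k₀ + (j:ℤ) - k₀).toNat else 0)
              = ρ ^ j := by
            intro j
            rw [if_pos (by omega)]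
            congr 1
            omega
          rw [tsum_congr heval, ENNReal.tsum_geometric]
        rw [hgeo, mul_assoc]


def CL (α p : ℝ) : ℝ≥0∞ :=
  ENNReal.ofReal ((2:ℝ) ^ (p - 1)) *
    (2 * (1 - ENNReal.ofReal ((2:ℝ) ^ (-((α + 1) * (p - 1) / 2))))⁻¹)

lemma geo_ne_top {c : ℝ} (hc : 0 < c) :
    (2 * (1 - ENNReal.ofReal ((2:ℝ) ^ (-c)))⁻¹ : ℝ≥0∞) ≠ ∞ := by
  have hρ : ENNReal.ofReal ((2:ℝ) ^ (-c)) < 1 := by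
    rw [ENNReal.ofReal_lt_one]
    exact Real.rpow_lt_one_of_one_lt_of_neg one_lt_two (by linarith)
  have hsub : (1 : ℝ≥0∞) - ENNReal.ofReal ((2:ℝ) ^ (-c)) ≠ 0 := by
    rw [Ne, tsub_eq_zero_iff_le]
    exact fun h => absurd h hρ.not_ge
  exact ENNReal.mul_ne_top (by norm_num) (ENNReal.inv_ne_top.mpr hsub)

lemma CL_ne_top {α p : ℝ} (hα : -1 < α) (hp : 1 < p) : CL α p ≠ ∞ :=
  ENNReal.mul_ne_top ENNReal.ofReal_ne_top (geo_ne_top (by nlinarith))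

lemma one_param {α p : ℝ} (hα : -1 < α) (hp : 1 < p) (g : ℂ → ℝ≥0∞) (hg : Measurable g) :
    ∑' n : ℤ × ℤ, (Vm α (dSq n)) ^ (1 - p) * (∫⁻ z in dSq n, g z ∂(Vm α)) ^ p
      ≤ CL α p * ∫⁻ z, (g z) ^ p ∂(Vm α) := by
  have hα1 : (0:ℝ) < α + 1 := by linarith
  have hp0 : (0:ℝ) < p := by linarith
  have hp1 : (0:ℝ) < p - 1 := by linarith
  set r : ℝ := p / (p - 1) with hrdef
  have hpr : p.HolderConjugate r := (Real.holderConjugate_iff_eq_conjExponent hp).mpr rfl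
  have hr0 : 0 < r := by positivity
  set c : ℝ := (α + 1) * (p - 1) / 2 with hcdef
  have hc : 0 < c := by positivity
  set s : ℝ := c / p with hsdef
  have hs : 0 < s := by positivity
  have hsr : s * r = (α + 1) / 2 := by
    rw [hsdef, hcdef, hrdef]; field_simp
  have hsp : s * p = c := by rw [hsdef]; field_simp
  set γ : ℝ := α - s * r with hγdef
  have hγ : -1 < γ := by rw [hγdef, hsr]; linarith
  have hγ1 : γ + 1 = (α + 1) / 2 := by rw [hγdef, hsr]; ring
  have hγ1pos : 0 < γ + 1 := by rw [hγ1]; linarith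
  -- measurability helpers
  have hφ : Measurable fun z : ℂ => g z * ENNReal.ofReal (z.im ^ s) :=
    hg.mul (measurable_dens s)
  have hψ : Measurable fun z : ℂ => ENNReal.ofReal (z.im ^ (-s)) := measurable_dens (-s)
  have hGsp : Measurable fun z : ℂ => (g z) ^ p * ENNReal.ofReal (z.im ^ (s * p)) :=
    (hg.pow measurable_const).mul (measurable_dens (s * p))
  -- the per-box estimate
  have key : ∀ n : ℤ × ℤ,
      (Vm α (dSq n)) ^ (1 - p) * (∫⁻ z in dSq n, g z ∂(Vm α)) ^ p
        ≤ ENNReal.ofReal ((2:ℝ) ^ (p - 1)) *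
            (ENNReal.ofReal ((2 * 2 ^ n.1 : ℝ) ^ (-c)) *
              ∫⁻ z in dSq n, (g z) ^ p * ENNReal.ofReal (z.im ^ (s * p)) ∂(Vm α)) := by
    intro n
    have hLpos : (0:ℝ) < 2 * 2 ^ n.1 := by
      have := two_zpow_pos n.1; linarith
    set L : ℝ := 2 * 2 ^ n.1 with hL
    have hab : dlo n < dhi n := dlo_lt_dhi n
    -- Hölder on the box
    have hhold : (∫⁻ z in dSq n, g z ∂(Vm α))
        ≤ (∫⁻ z in dSq n, (g z) ^ p * ENNReal.ofReal (z.im ^ (s * p)) ∂(Vm α)) ^ (1/p)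
          * (∫⁻ z in dSq n, ENNReal.ofReal (z.im ^ (-(s * r))) ∂(Vm α)) ^ (1/r) := by
      have h1 : ∫⁻ z in dSq n, g z ∂(Vm α)
          = ∫⁻ z in dSq n, ((fun w : ℂ => g w * ENNReal.ofReal (w.im ^ s)) *
              (fun w : ℂ => ENNReal.ofReal (w.im ^ (-s)))) z ∂(Vm α) := by
        refine setLIntegral_congr_fun (measurableSet_dSq n) (fun z hzm => ?_)
        have hz : 0 < z.im := hzm.2.1
        simp only [Pi.mul_apply]
        rw [mul_assoc, ← ENNReal.ofReal_mul (Real.rpow_nonneg hz.le _),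
          ← Real.rpow_add hz]
        norm_num
      have hφp : ∫⁻ z in dSq n, (g z * ENNReal.ofReal (z.im ^ s)) ^ p ∂(Vm α)
          = ∫⁻ z in dSq n, (g z) ^ p * ENNReal.ofReal (z.im ^ (s * p)) ∂(Vm α) := by
        refine setLIntegral_congr_fun (measurableSet_dSq n) (fun z hzm => ?_)
        have hz : 0 < z.im := hzm.2.1
        rw [ENNReal.mul_rpow_of_nonneg _ _ hp0.le,
          ENNReal.ofReal_rpow_of_pos (Real.rpow_pos_of_pos hz _),
          ← Real.rpow_mul hz.le]
      have hψr : ∫⁻ z in dSq n, (ENNReal.ofReal (z.im ^ (-s))) ^ r ∂(Vm α)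
          = ∫⁻ z in dSq n, ENNReal.ofReal (z.im ^ (-(s * r))) ∂(Vm α) := by
        refine setLIntegral_congr_fun (measurableSet_dSq n) (fun z hzm => ?_)
        have hz : 0 < z.im := hzm.2.1
        rw [ENNReal.ofReal_rpow_of_pos (Real.rpow_pos_of_pos hz _), ← Real.rpow_mul hz.le,
          neg_mul]
      have h2 := ENNReal.lintegral_mul_le_Lp_mul_Lq ((Vm α).restrict (dSq n)) hpr
        hφ.aemeasurable hψ.aemeasurable
      rw [h1]
      refine le_trans h2 (le_of_eq ?_)
      congr 1
      · rw [← hφp]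
      · rw [← hψr]
    -- the weighted volume of the box
    have hF2 : ∫⁻ z in dSq n, ENNReal.ofReal (z.im ^ (-(s * r))) ∂(Vm α)
        = ENNReal.ofReal (L ^ (γ + 2) / (γ + 1)) := by
      rw [setLIntegral_Vm α (measurableSet_dSq n) (carlSq_subset_UHP _ _)
        (measurable_dens (-(s * r)))]
      have h3 : ∫⁻ z in dSq n,
            ENNReal.ofReal (z.im ^ α) * ENNReal.ofReal (z.im ^ (-(s * r))) ∂volume
          = ∫⁻ z in dSq n, ENNReal.ofReal (z.im ^ γ) ∂volume := by
        refine setLIntegral_congr_fun (measurableSet_dSq n) (fun z hzm => ?_)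
        have hz : 0 < z.im := hzm.2.1
        rw [← ENNReal.ofReal_mul (Real.rpow_nonneg hz.le _), ← Real.rpow_add hz, hγdef,
          sub_eq_add_neg]
      rw [h3, dSq, lintegral_im_rpow_carlSq hγ hab, dlen]
    have hV : Vm α (dSq n) = ENNReal.ofReal (L ^ (α + 2) / (α + 1)) := Vm_dSq hα n
    have hVpos : (0:ℝ) < L ^ (α + 2) / (α + 1) :=
      div_pos (Real.rpow_pos_of_pos hLpos _) hα1
    have hF2pos : (0:ℝ) < L ^ (γ + 2) / (γ + 1) :=
      div_pos (Real.rpow_pos_of_pos hLpos _) hγ1pos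
    -- raise to the power p
    have hpow : (∫⁻ z in dSq n, g z ∂(Vm α)) ^ p
        ≤ (∫⁻ z in dSq n, (g z) ^ p * ENNReal.ofReal (z.im ^ (s * p)) ∂(Vm α))
          * ENNReal.ofReal ((L ^ (γ + 2) / (γ + 1)) ^ (p - 1)) := by
      have h4 := ENNReal.rpow_le_rpow hhold hp0.le
      rw [ENNReal.mul_rpow_of_nonneg _ _ hp0.le, ← ENNReal.rpow_mul, ← ENNReal.rpow_mul] at h4
      have e1 : 1/p * p = 1 := by field_simp
      have e2 : 1/r * p = p - 1 := by rw [hrdef]; field_simp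
      rw [e1, e2, ENNReal.rpow_one, hF2,
        ENNReal.ofReal_rpow_of_pos hF2pos] at h4
      exact h4
    -- the real-exponent computation
    have hreal : (L ^ (α + 2) / (α + 1)) ^ (1 - p) * (L ^ (γ + 2) / (γ + 1)) ^ (p - 1)
        = (2:ℝ) ^ (p - 1) * L ^ (-c) := by
      rw [hγ1, Real.div_rpow (Real.rpow_nonneg hLpos.le _) hα1.le,
        Real.div_rpow (Real.rpow_nonneg hLpos.le _) (by linarith : (0:ℝ) ≤ (α+1)/2),
        ← Real.rpow_mul hLpos.le, ← Real.rpow_mul hLpos.le, div_mul_div_comm,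
        ← Real.rpow_add hLpos]
      have hexp : (α + 2) * (1 - p) + (γ + 2) * (p - 1) = -c := by
        rw [hγdef, hsr, hcdef]; ring
      rw [hexp]
      have hden : (α + 1) ^ (1 - p) * ((α + 1) / 2) ^ (p - 1) = ((2:ℝ) ^ (p - 1))⁻¹ := by
        rw [Real.div_rpow hα1.le (by norm_num : (0:ℝ) ≤ 2), ← mul_div_assoc,
          ← Real.rpow_add hα1]
        have e3 : (1 - p) + (p - 1) = 0 := by ring
        rw [e3, Real.rpow_zero, one_div]
      rw [hden, div_eq_mul_inv, inv_inv]
      ring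
    calc (Vm α (dSq n)) ^ (1 - p) * (∫⁻ z in dSq n, g z ∂(Vm α)) ^ p
        ≤ (Vm α (dSq n)) ^ (1 - p) *
            ((∫⁻ z in dSq n, (g z) ^ p * ENNReal.ofReal (z.im ^ (s * p)) ∂(Vm α))
              * ENNReal.ofReal ((L ^ (γ + 2) / (γ + 1)) ^ (p - 1))) :=
          mul_le_mul_right hpow _
      _ = ENNReal.ofReal ((2:ℝ) ^ (p - 1)) * (ENNReal.ofReal (L ^ (-c)) *
            ∫⁻ z in dSq n, (g z) ^ p * ENNReal.ofReal (z.im ^ (s * p)) ∂(Vm α)) := by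
          rw [hV, ENNReal.ofReal_rpow_of_pos hVpos]
          rw [show ENNReal.ofReal ((L ^ (α + 2) / (α + 1)) ^ (1 - p)) *
              ((∫⁻ z in dSq n, (g z) ^ p * ENNReal.ofReal (z.im ^ (s * p)) ∂(Vm α))
                * ENNReal.ofReal ((L ^ (γ + 2) / (γ + 1)) ^ (p - 1)))
            = (ENNReal.ofReal ((L ^ (α + 2) / (α + 1)) ^ (1 - p)) *
                ENNReal.ofReal ((L ^ (γ + 2) / (γ + 1)) ^ (p - 1)))
              * ∫⁻ z in dSq n, (g z) ^ p * ENNReal.ofReal (z.im ^ (s * p)) ∂(Vm α)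
            from by ring]
          rw [← ENNReal.ofReal_mul (Real.rpow_nonneg hVpos.le _), hreal,
            ENNReal.ofReal_mul (Real.rpow_nonneg (by norm_num) _), mul_assoc]
  -- summing over all boxes
  have hsum : ∑' n : ℤ × ℤ, ENNReal.ofReal ((2 * 2 ^ n.1 : ℝ) ^ (-c)) *
        (∫⁻ z in dSq n, (g z) ^ p * ENNReal.ofReal (z.im ^ (s * p)) ∂(Vm α))
      ≤ (2 * (1 - ENNReal.ofReal ((2:ℝ) ^ (-c)))⁻¹) * ∫⁻ z, (g z) ^ p ∂(Vm α) := by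
    have h1 : ∀ n : ℤ × ℤ, ENNReal.ofReal ((2 * 2 ^ n.1 : ℝ) ^ (-c)) *
          (∫⁻ z in dSq n, (g z) ^ p * ENNReal.ofReal (z.im ^ (s * p)) ∂(Vm α))
        = ∫⁻ z, (dSq n).indicator (fun _ => ENNReal.ofReal ((2 * 2 ^ n.1 : ℝ) ^ (-c))) z
            * ((g z) ^ p * ENNReal.ofReal (z.im ^ (s * p))) ∂(Vm α) := by
      intro n
      rw [← lintegral_const_mul _ hGsp, ← lintegral_indicator (measurableSet_dSq n)]
      congr 1
      funext z
      by_cases hzm : z ∈ dSq n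
      · rw [indicator_of_mem hzm, indicator_of_mem hzm]
      · rw [indicator_of_notMem hzm, indicator_of_notMem hzm, zero_mul]
    rw [tsum_congr h1, ← lintegral_tsum (f := fun n z => (dSq n).indicator
        (fun _ => ENNReal.ofReal ((2 * 2 ^ n.1 : ℝ) ^ (-c))) z
          * ((g z) ^ p * ENNReal.ofReal (z.im ^ (s * p)))) (fun n =>
      ((measurable_const.indicator (measurableSet_dSq n)).mul hGsp).aemeasurable)]
    have h2 : ∀ z : ℂ, (∑' n : ℤ × ℤ,
          (dSq n).indicator (fun _ => ENNReal.ofReal ((2 * 2 ^ n.1 : ℝ) ^ (-c))) z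
            * ((g z) ^ p * ENNReal.ofReal (z.im ^ (s * p))))
        = (∑' n : ℤ × ℤ,
            (dSq n).indicator (fun _ => ENNReal.ofReal ((2 * 2 ^ n.1 : ℝ) ^ (-c))) z)
          * ((g z) ^ p * ENNReal.ofReal (z.im ^ (s * p))) :=
      fun z => ENNReal.tsum_mul_right
    calc ∫⁻ z, (∑' n : ℤ × ℤ,
          (dSq n).indicator (fun _ => ENNReal.ofReal ((2 * 2 ^ n.1 : ℝ) ^ (-c))) z
            * ((g z) ^ p * ENNReal.ofReal (z.im ^ (s * p)))) ∂(Vm α)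
        ≤ ∫⁻ z, (2 * (1 - ENNReal.ofReal ((2:ℝ) ^ (-c)))⁻¹) * (g z) ^ p ∂(Vm α) := by
          apply lintegral_mono_ae
          have haeU : ∀ᵐ z' ∂(Vm α), 0 < z'.im := by
            have h5 : ∀ᵐ z' ∂(volume.restrict UHP), 0 < z'.im := by
              filter_upwards [ae_restrict_mem measurableSet_UHP] with z' hz' using hz'
            rw [Vm]
            exact h5.filter_mono (withDensity_absolutelyContinuous _ _).ae_le
          filter_upwards [haeU] with z hz
          rw [h2 z]
          have h6 := sumchi hc hz
          calc (∑' n : ℤ × ℤ,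
                (dSq n).indicator (fun _ => ENNReal.ofReal ((2 * 2 ^ n.1 : ℝ) ^ (-c))) z)
                  * ((g z) ^ p * ENNReal.ofReal (z.im ^ (s * p)))
              ≤ (ENNReal.ofReal (z.im ^ (-c)) *
                  (2 * (1 - ENNReal.ofReal ((2:ℝ) ^ (-c)))⁻¹))
                  * ((g z) ^ p * ENNReal.ofReal (z.im ^ (s * p))) :=
                mul_le_mul_left h6 _
            _ = (2 * (1 - ENNReal.ofReal ((2:ℝ) ^ (-c)))⁻¹) * (g z) ^ p := by
                rw [hsp]
                have h7 : ENNReal.ofReal (z.im ^ (-c)) * ENNReal.ofReal (z.im ^ c) = 1 := by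
                  rw [← ENNReal.ofReal_mul (Real.rpow_nonneg hz.le _), ← Real.rpow_add hz]
                  norm_num
                rw [show (ENNReal.ofReal (z.im ^ (-c)) *
                      (2 * (1 - ENNReal.ofReal ((2:ℝ) ^ (-c)))⁻¹))
                      * ((g z) ^ p * ENNReal.ofReal (z.im ^ c))
                    = ((2 * (1 - ENNReal.ofReal ((2:ℝ) ^ (-c)))⁻¹) * (g z) ^ p)
                      * (ENNReal.ofReal (z.im ^ (-c)) * ENNReal.ofReal (z.im ^ c))
                  from by ring, h7, mul_one]
      _ = (2 * (1 - ENNReal.ofReal ((2:ℝ) ^ (-c)))⁻¹) * ∫⁻ z, (g z) ^ p ∂(Vm α) :=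
          lintegral_const_mul' _ _ (geo_ne_top hc)
  -- put everything together
  calc ∑' n : ℤ × ℤ, (Vm α (dSq n)) ^ (1 - p) * (∫⁻ z in dSq n, g z ∂(Vm α)) ^ p
      ≤ ∑' n : ℤ × ℤ, ENNReal.ofReal ((2:ℝ) ^ (p - 1)) *
          (ENNReal.ofReal ((2 * 2 ^ n.1 : ℝ) ^ (-c)) *
            ∫⁻ z in dSq n, (g z) ^ p * ENNReal.ofReal (z.im ^ (s * p)) ∂(Vm α)) :=
        Summable.tsum_le_tsum key ENNReal.summable ENNReal.summable
    _ = ENNReal.ofReal ((2:ℝ) ^ (p - 1)) *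
          ∑' n : ℤ × ℤ, ENNReal.ofReal ((2 * 2 ^ n.1 : ℝ) ^ (-c)) *
            ∫⁻ z in dSq n, (g z) ^ p * ENNReal.ofReal (z.im ^ (s * p)) ∂(Vm α) :=
        ENNReal.tsum_mul_left
    _ ≤ ENNReal.ofReal ((2:ℝ) ^ (p - 1)) *
          ((2 * (1 - ENNReal.ofReal ((2:ℝ) ^ (-c)))⁻¹) * ∫⁻ z, (g z) ^ p ∂(Vm α)) :=
        mul_le_mul_right hsum _
    _ = CL α p * ∫⁻ z, (g z) ^ p ∂(Vm α) := by
        rw [CL, ← hcdef]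
        ring


def Qb (n : (ℤ × ℤ) × (ℤ × ℤ)) : Set (ℂ × ℂ) := dSq n.1 ×ˢ dSq n.2

lemma measurableSet_Qb (n : (ℤ × ℤ) × (ℤ × ℤ)) : MeasurableSet (Qb n) :=
  (measurableSet_dSq n.1).prod (measurableSet_dSq n.2)

def Nn (α₁ α₂ : ℝ) (g : ℂ × ℂ → ℝ≥0∞) (n : (ℤ × ℤ) × (ℤ × ℤ)) : ℝ≥0∞ :=
  ∫⁻ w in Qb n, g w ∂((Vm α₁).prod (Vm α₂))

def Dn (α₁ α₂ : ℝ) (n : (ℤ × ℤ) × (ℤ × ℤ)) : ℝ≥0∞ :=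
  ((Vm α₁).prod (Vm α₂)) (Qb n)

lemma Dn_eq (α₁ α₂ : ℝ) (n : (ℤ × ℤ) × (ℤ × ℤ)) :
    Dn α₁ α₂ n = Vm α₁ (dSq n.1) * Vm α₂ (dSq n.2) := by
  rw [Dn, Qb, Measure.prod_prod]

lemma Vm_dSq_ne_zero {α : ℝ} (hα : -1 < α) (m : ℤ × ℤ) : Vm α (dSq m) ≠ 0 := by
  rw [Vm_dSq hα]
  exact (ENNReal.ofReal_pos.mpr (Vm_dSq_pos hα m)).ne'

lemma Vm_dSq_ne_top {α : ℝ} (hα : -1 < α) (m : ℤ × ℤ) : Vm α (dSq m) ≠ ∞ := by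
  rw [Vm_dSq hα]; exact ENNReal.ofReal_ne_top

lemma Vm_dSq_rpow_ne_top {α : ℝ} (hα : -1 < α) (m : ℤ × ℤ) (t : ℝ) :
    (Vm α (dSq m)) ^ t ≠ ∞ := by
  rw [Vm_dSq hα, ENNReal.ofReal_rpow_of_pos (Vm_dSq_pos hα m)]
  exact ENNReal.ofReal_ne_top

lemma Dn_ne_zero {α₁ α₂ : ℝ} (hα₁ : -1 < α₁) (hα₂ : -1 < α₂) (n : (ℤ × ℤ) × (ℤ × ℤ)) :
    Dn α₁ α₂ n ≠ 0 := by
  rw [Dn_eq]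
  exact mul_ne_zero (Vm_dSq_ne_zero hα₁ n.1) (Vm_dSq_ne_zero hα₂ n.2)

lemma Dn_ne_top {α₁ α₂ : ℝ} (hα₁ : -1 < α₁) (hα₂ : -1 < α₂) (n : (ℤ × ℤ) × (ℤ × ℤ)) :
    Dn α₁ α₂ n ≠ ∞ := by
  rw [Dn_eq]
  exact ENNReal.mul_ne_top (Vm_dSq_ne_top hα₁ n.1) (Vm_dSq_ne_top hα₂ n.2)

lemma biparam {α₁ α₂ p : ℝ} (hα₁ : -1 < α₁) (hα₂ : -1 < α₂) (hp : 1 < p)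
    (g : ℂ × ℂ → ℝ≥0∞) (hg : Measurable g) :
    ∑' n : (ℤ × ℤ) × (ℤ × ℤ), (Nn α₁ α₂ g n) ^ p * (Dn α₁ α₂ n) ^ (1 - p)
      ≤ (CL α₁ p * CL α₂ p) * ∫⁻ w, (g w) ^ p ∂((Vm α₁).prod (Vm α₂)) := by
  set h : (ℤ × ℤ) → ℂ → ℝ≥0∞ := fun n₂ z₁ => ∫⁻ z₂ in dSq n₂, g (z₁, z₂) ∂(Vm α₂)
    with hhdef
  have hhm : ∀ n₂ : ℤ × ℤ, Measurable (h n₂) := by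
    intro n₂
    apply Measurable.lintegral_prod_right
    exact hg.comp (measurable_fst.prodMk measurable_snd)
  have hN : ∀ n : (ℤ × ℤ) × (ℤ × ℤ), Nn α₁ α₂ g n
      = ∫⁻ z₁ in dSq n.1, h n.2 z₁ ∂(Vm α₁) := by
    intro n
    rw [Nn, Qb, ← Measure.prod_restrict, lintegral_prod _ hg.aemeasurable]
  have hterm : ∀ n : (ℤ × ℤ) × (ℤ × ℤ),
      (Nn α₁ α₂ g n) ^ p * (Dn α₁ α₂ n) ^ (1 - p)
        = (Vm α₂ (dSq n.2)) ^ (1 - p) *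
            ((Vm α₁ (dSq n.1)) ^ (1 - p) * (∫⁻ z₁ in dSq n.1, h n.2 z₁ ∂(Vm α₁)) ^ p) := by
    intro n
    rw [hN, Dn_eq, ENNReal.mul_rpow_of_ne_top (Vm_dSq_ne_top hα₁ n.1)
      (Vm_dSq_ne_top hα₂ n.2)]
    ring
  calc ∑' n : (ℤ × ℤ) × (ℤ × ℤ), (Nn α₁ α₂ g n) ^ p * (Dn α₁ α₂ n) ^ (1 - p)
      = ∑' n₁ : ℤ × ℤ, ∑' n₂ : ℤ × ℤ, (Vm α₂ (dSq n₂)) ^ (1 - p) *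
          ((Vm α₁ (dSq n₁)) ^ (1 - p) * (∫⁻ z₁ in dSq n₁, h n₂ z₁ ∂(Vm α₁)) ^ p) := by
        rw [tsum_congr hterm]
        exact ENNReal.tsum_prod'
    _ = ∑' n₂ : ℤ × ℤ, ∑' n₁ : ℤ × ℤ, (Vm α₂ (dSq n₂)) ^ (1 - p) *
          ((Vm α₁ (dSq n₁)) ^ (1 - p) * (∫⁻ z₁ in dSq n₁, h n₂ z₁ ∂(Vm α₁)) ^ p) :=
        ENNReal.tsum_comm
    _ = ∑' n₂ : ℤ × ℤ, (Vm α₂ (dSq n₂)) ^ (1 - p) *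
          ∑' n₁ : ℤ × ℤ, (Vm α₁ (dSq n₁)) ^ (1 - p) *
            (∫⁻ z₁ in dSq n₁, h n₂ z₁ ∂(Vm α₁)) ^ p := by
        exact tsum_congr fun n₂ => ENNReal.tsum_mul_left
    _ ≤ ∑' n₂ : ℤ × ℤ, (Vm α₂ (dSq n₂)) ^ (1 - p) *
          (CL α₁ p * ∫⁻ z₁, (h n₂ z₁) ^ p ∂(Vm α₁)) := by
        refine Summable.tsum_le_tsum (fun n₂ => mul_le_mul_right ?_ _) ENNReal.summable
          ENNReal.summable
        exact one_param hα₁ hp (h n₂) (hhm n₂)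
    _ = CL α₁ p * ∑' n₂ : ℤ × ℤ, (Vm α₂ (dSq n₂)) ^ (1 - p) *
          ∫⁻ z₁, (h n₂ z₁) ^ p ∂(Vm α₁) := by
        rw [← ENNReal.tsum_mul_left]
        exact tsum_congr fun n₂ => by ring
    _ = CL α₁ p * ∑' n₂ : ℤ × ℤ, ∫⁻ z₁, (Vm α₂ (dSq n₂)) ^ (1 - p) * (h n₂ z₁) ^ p
          ∂(Vm α₁) := by
        congr 1
        exact tsum_congr fun n₂ =>
          (lintegral_const_mul' _ _ (Vm_dSq_rpow_ne_top hα₂ n₂ _)).symm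
    _ = CL α₁ p * ∫⁻ z₁, ∑' n₂ : ℤ × ℤ, (Vm α₂ (dSq n₂)) ^ (1 - p) * (h n₂ z₁) ^ p
          ∂(Vm α₁) := by
        congr 1
        exact (lintegral_tsum fun n₂ =>
          (measurable_const.mul ((hhm n₂).pow measurable_const)).aemeasurable).symm
    _ ≤ CL α₁ p * ∫⁻ z₁, (CL α₂ p * ∫⁻ z₂, (g (z₁, z₂)) ^ p ∂(Vm α₂)) ∂(Vm α₁) := by
        refine mul_le_mul_right (lintegral_mono fun z₁ => ?_) _
        exact one_param hα₂ hp (fun z₂ => g (z₁, z₂))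
          (hg.comp (measurable_prodMk_left))
    _ = (CL α₁ p * CL α₂ p) * ∫⁻ w, (g w) ^ p ∂((Vm α₁).prod (Vm α₂)) := by
        rw [lintegral_const_mul' _ _ (CL_ne_top hα₂ hp),
          ← lintegral_prod _ ((hg.pow measurable_const).aemeasurable), mul_assoc]

lemma Vm_carlSq_pos {α : ℝ} (hα : -1 < α) {a b : ℝ} (hab : a < b) :
    0 < (b - a) ^ (α + 2) / (α + 1) :=
  div_pos (Real.rpow_pos_of_pos (sub_pos.2 hab) _) (by linarith)

lemma ptwise {α₁ α₂ : ℝ} (hα₁ : -1 < α₁) (hα₂ : -1 < α₂) (f : ℂ × ℂ → ℂ) (z : ℂ × ℂ) :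
    strongMaxFn α₁ α₂ f z
      ≤ (ENNReal.ofReal ((4:ℝ) ^ (α₁ + 2)) * ENNReal.ofReal ((4:ℝ) ^ (α₂ + 2))) *
        ⨆ n : (ℤ × ℤ) × (ℤ × ℤ), (Qb n).indicator
          (fun _ => Nn α₁ α₂ (fun w => (‖f w‖₊ : ℝ≥0∞)) n / Dn α₁ α₂ n) z := by
  unfold strongMaxFn
  refine iSup_le fun a₁ => iSup_le fun b₁ => iSup_le fun a₂ => iSup_le fun b₂ =>
    iSup_le fun h₁ => iSup_le fun h₂ => iSup_le fun hz => ?_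
  obtain ⟨n₁, hsub₁, hsz₁⟩ := cover h₁
  obtain ⟨n₂, hsub₂, hsz₂⟩ := cover h₂
  have hzn : z ∈ Qb (n₁, n₂) := ⟨hsub₁ hz.1, hsub₂ hz.2⟩
  have hsubQ : carlSq a₁ b₁ ×ˢ carlSq a₂ b₂ ⊆ Qb (n₁, n₂) := Set.prod_mono hsub₁ hsub₂
  have hNle : (∫⁻ w in carlSq a₁ b₁ ×ˢ carlSq a₂ b₂, (‖f w‖₊ : ℝ≥0∞)
      ∂((Vm α₁).prod (Vm α₂))) ≤ Nn α₁ α₂ (fun w => (‖f w‖₊ : ℝ≥0∞)) (n₁, n₂) :=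
    lintegral_mono_set hsubQ
  have hDR : ((Vm α₁).prod (Vm α₂)) (carlSq a₁ b₁ ×ˢ carlSq a₂ b₂)
      = Vm α₁ (carlSq a₁ b₁) * Vm α₂ (carlSq a₂ b₂) := Measure.prod_prod _ _
  have hD12 : Dn α₁ α₂ (n₁, n₂)
      ≤ (ENNReal.ofReal ((4:ℝ) ^ (α₁ + 2)) * ENNReal.ofReal ((4:ℝ) ^ (α₂ + 2))) *
        ((Vm α₁).prod (Vm α₂)) (carlSq a₁ b₁ ×ˢ carlSq a₂ b₂) := by
    rw [Dn_eq, hDR]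
    calc Vm α₁ (dSq n₁) * Vm α₂ (dSq n₂)
        ≤ (ENNReal.ofReal ((4:ℝ) ^ (α₁ + 2)) * Vm α₁ (carlSq a₁ b₁)) *
          (ENNReal.ofReal ((4:ℝ) ^ (α₂ + 2)) * Vm α₂ (carlSq a₂ b₂)) :=
          mul_le_mul' (Vcomp hα₁ h₁ hsz₁) (Vcomp hα₂ h₂ hsz₂)
      _ = _ := by ring
  have hDRpos : ((Vm α₁).prod (Vm α₂)) (carlSq a₁ b₁ ×ˢ carlSq a₂ b₂) ≠ 0 := by
    rw [hDR, Vm_carlSq hα₁ h₁, Vm_carlSq hα₂ h₂]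
    exact mul_ne_zero (ENNReal.ofReal_pos.mpr (Vm_carlSq_pos hα₁ h₁)).ne'
      (ENNReal.ofReal_pos.mpr (Vm_carlSq_pos hα₂ h₂)).ne'
  have hDRtop : ((Vm α₁).prod (Vm α₂)) (carlSq a₁ b₁ ×ˢ carlSq a₂ b₂) ≠ ∞ := by
    rw [hDR, Vm_carlSq hα₁ h₁, Vm_carlSq hα₂ h₂]
    exact ENNReal.mul_ne_top ENNReal.ofReal_ne_top ENNReal.ofReal_ne_top
  have hD0 := Dn_ne_zero hα₁ hα₂ (n₁, n₂)
  have hDt := Dn_ne_top hα₁ hα₂ (n₁, n₂)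
  set cA : ℝ≥0∞ := ENNReal.ofReal ((4:ℝ) ^ (α₁ + 2)) * ENNReal.ofReal ((4:ℝ) ^ (α₂ + 2))
  set NN : ℝ≥0∞ := Nn α₁ α₂ (fun w => (‖f w‖₊ : ℝ≥0∞)) (n₁, n₂)
  set DD : ℝ≥0∞ := Dn α₁ α₂ (n₁, n₂)
  have hgoal : (∫⁻ w in carlSq a₁ b₁ ×ˢ carlSq a₂ b₂, (‖f w‖₊ : ℝ≥0∞)
        ∂((Vm α₁).prod (Vm α₂))) /
        ((Vm α₁).prod (Vm α₂)) (carlSq a₁ b₁ ×ˢ carlSq a₂ b₂)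
      ≤ cA * (NN / DD) := by
    rw [ENNReal.div_le_iff hDRpos hDRtop]
    calc (∫⁻ w in carlSq a₁ b₁ ×ˢ carlSq a₂ b₂, (‖f w‖₊ : ℝ≥0∞)
          ∂((Vm α₁).prod (Vm α₂)))
        ≤ NN := hNle
      _ = NN / DD * DD := (ENNReal.div_mul_cancel hD0 hDt).symm
      _ ≤ NN / DD * (cA * ((Vm α₁).prod (Vm α₂)) (carlSq a₁ b₁ ×ˢ carlSq a₂ b₂)) :=
          mul_le_mul_right hD12 _
      _ = cA * (NN / DD) * ((Vm α₁).prod (Vm α₂)) (carlSq a₁ b₁ ×ˢ carlSq a₂ b₂) := by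
          ring
  refine le_trans hgoal (mul_le_mul_right ?_ _)
  have h := le_iSup (fun n : (ℤ × ℤ) × (ℤ × ℤ) => (Qb n).indicator
    (fun _ => Nn α₁ α₂ (fun w => (‖f w‖₊ : ℝ≥0∞)) n / Dn α₁ α₂ n) z) (n₁, n₂)
  rwa [indicator_of_mem hzn] at h

end SMCE

open SMCE

/-- if `μ` is a `(q/p, α⃗)`-Carleson measure on `Π⁺×Π⁺`, then the strong
maximal function satisfies the embedding
`∫ (M_{α⃗}f)^q dμ ≤ C (∫ |f|^p dV_{α⃗})^{q/p}` for every `f ∈ L^p(dV_{α⃗})`. -/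
theorem strong_maximal_carleson_embedding
    (α₁ α₂ : ℝ) (hα₁ : -1 < α₁) (hα₂ : -1 < α₂)
    (p q : ℝ) (hp : 1 < p) (hpq : p ≤ q)
    (μ : Measure (ℂ × ℂ)) (C₀ : ℝ) (hC₀ : 0 < C₀)
    (hcarl : ∀ a₁ b₁ a₂ b₂ : ℝ, a₁ < b₁ → a₂ < b₂ →
      μ (carlSq a₁ b₁ ×ˢ carlSq a₂ b₂) ≤
        ENNReal.ofReal C₀ *
          (Vm α₁ (carlSq a₁ b₁) * Vm α₂ (carlSq a₂ b₂)) ^ (q / p)) :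
    ∃ C : ℝ, 0 < C ∧ ∀ f : ℂ × ℂ → ℂ,
      MemLp f (ENNReal.ofReal p) ((Vm α₁).prod (Vm α₂)) →
      (∫⁻ z in UHP ×ˢ UHP, (strongMaxFn α₁ α₂ f z) ^ q ∂μ) ≤
        ENNReal.ofReal C *
          (∫⁻ z, (‖f z‖₊ : ℝ≥0∞) ^ p ∂((Vm α₁).prod (Vm α₂))) ^ (q / p) := by
  classical
  have hp0 : (0:ℝ) < p := lt_trans one_pos hp
  have hq0 : (0:ℝ) < q := lt_of_lt_of_le hp0 hpq
  have hqp1 : 1 ≤ q / p := (one_le_div hp0).mpr hpq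
  set cA : ℝ≥0∞ := ENNReal.ofReal ((4:ℝ) ^ (α₁ + 2)) * ENNReal.ofReal ((4:ℝ) ^ (α₂ + 2))
    with hcA
  have hcAtop : cA ≠ ∞ := ENNReal.mul_ne_top ENNReal.ofReal_ne_top ENNReal.ofReal_ne_top
  set K : ℝ≥0∞ := cA ^ q * ENNReal.ofReal C₀ * (CL α₁ p * CL α₂ p) ^ (q / p) with hKdef
  have hKtop : K ≠ ∞ := by
    refine ENNReal.mul_ne_top (ENNReal.mul_ne_top ?_ ENNReal.ofReal_ne_top) ?_
    · exact ENNReal.rpow_ne_top_of_nonneg hq0.le hcAtop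
    · exact ENNReal.rpow_ne_top_of_nonneg (by positivity)
        (ENNReal.mul_ne_top (CL_ne_top hα₁ hp) (CL_ne_top hα₂ hp))
  refine ⟨K.toReal + 1, by positivity, fun f hf => ?_⟩
  obtain ⟨f', hf'meas, hff'⟩ : ∃ f' : ℂ × ℂ → ℂ,
      Measurable f' ∧ f =ᵐ[(Vm α₁).prod (Vm α₂)] f' := by
    have h := hf.aestronglyMeasurable.aemeasurable
    exact ⟨h.mk f, h.measurable_mk, h.ae_eq_mk⟩
  have hgmeas : Measurable fun w : ℂ × ℂ => (‖f' w‖₊ : ℝ≥0∞) := hf'meas.nnnorm.coe_nnreal_ennreal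
  have hbox : ∀ S : Set (ℂ × ℂ),
      (∫⁻ w in S, (‖f w‖₊ : ℝ≥0∞) ∂((Vm α₁).prod (Vm α₂)))
        = ∫⁻ w in S, (‖f' w‖₊ : ℝ≥0∞) ∂((Vm α₁).prod (Vm α₂)) := by
    intro S
    refine lintegral_congr_ae ?_
    filter_upwards [ae_restrict_of_ae hff'] with w hw
    rw [hw]
  have hsm : ∀ z, strongMaxFn α₁ α₂ f z = strongMaxFn α₁ α₂ f' z := by
    intro z
    unfold strongMaxFn
    exact iSup_congr fun a₁ => iSup_congr fun b₁ => iSup_congr fun a₂ =>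
      iSup_congr fun b₂ => iSup_congr fun _ => iSup_congr fun _ =>
      iSup_congr fun _ => by rw [hbox]
  have hrhs : (∫⁻ w, (‖f w‖₊ : ℝ≥0∞) ^ p ∂((Vm α₁).prod (Vm α₂)))
      = ∫⁻ w, (‖f' w‖₊ : ℝ≥0∞) ^ p ∂((Vm α₁).prod (Vm α₂)) := by
    refine lintegral_congr_ae ?_
    filter_upwards [hff'] with w hw
    rw [hw]
  set g : ℂ × ℂ → ℝ≥0∞ := fun w => (‖f' w‖₊ : ℝ≥0∞) with hgdef
  -- Step 2 : integrate the pointwise bound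
  have hstep2 : (∫⁻ z in UHP ×ˢ UHP, (strongMaxFn α₁ α₂ f' z) ^ q ∂μ)
      ≤ ∑' n : (ℤ × ℤ) × (ℤ × ℤ),
          (cA * (Nn α₁ α₂ g n / Dn α₁ α₂ n)) ^ q * μ (Qb n) := by
    have hpt : ∀ z : ℂ × ℂ, (strongMaxFn α₁ α₂ f' z) ^ q
        ≤ ∑' n : (ℤ × ℤ) × (ℤ × ℤ), (Qb n).indicator
            (fun _ => (cA * (Nn α₁ α₂ g n / Dn α₁ α₂ n)) ^ q) z := by
      intro z
      have h1 := ptwise hα₁ hα₂ f' z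
      have h2 : strongMaxFn α₁ α₂ f' z
          ≤ ⨆ n : (ℤ × ℤ) × (ℤ × ℤ), cA * (Qb n).indicator
              (fun _ => Nn α₁ α₂ g n / Dn α₁ α₂ n) z := by
        rw [← ENNReal.mul_iSup]
        exact h1
      refine le_trans (ENNReal.rpow_le_rpow h2 hq0.le) ?_
      refine le_trans (isup_rpow_le_tsum _ hq0) ?_
      refine Summable.tsum_le_tsum (fun n => ?_) ENNReal.summable ENNReal.summable
      by_cases hzn : z ∈ Qb n
      · rw [indicator_of_mem hzn, indicator_of_mem hzn]
      · rw [indicator_of_notMem hzn, indicator_of_notMem hzn, mul_zero,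
          ENNReal.zero_rpow_of_pos hq0]
    calc (∫⁻ z in UHP ×ˢ UHP, (strongMaxFn α₁ α₂ f' z) ^ q ∂μ)
        ≤ ∫⁻ z in UHP ×ˢ UHP, (∑' n : (ℤ × ℤ) × (ℤ × ℤ), (Qb n).indicator
            (fun _ => (cA * (Nn α₁ α₂ g n / Dn α₁ α₂ n)) ^ q) z) ∂μ :=
          lintegral_mono fun z => hpt z
      _ = ∑' n : (ℤ × ℤ) × (ℤ × ℤ), ∫⁻ z in UHP ×ˢ UHP, (Qb n).indicator
            (fun _ => (cA * (Nn α₁ α₂ g n / Dn α₁ α₂ n)) ^ q) z ∂μ :=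
          lintegral_tsum fun n =>
            (measurable_const.indicator (measurableSet_Qb n)).aemeasurable
      _ ≤ ∑' n : (ℤ × ℤ) × (ℤ × ℤ), (cA * (Nn α₁ α₂ g n / Dn α₁ α₂ n)) ^ q * μ (Qb n) := by
          refine Summable.tsum_le_tsum (fun n => ?_) ENNReal.summable ENNReal.summable
          rw [lintegral_indicator (measurableSet_Qb n), setLIntegral_const,
            Measure.restrict_apply (measurableSet_Qb n)]
          exact mul_le_mul_right (measure_mono inter_subset_left) _
  -- Step 3 : Carleson hypothesis on each box
  have hstep3 : ∀ n : (ℤ × ℤ) × (ℤ × ℤ),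
      (cA * (Nn α₁ α₂ g n / Dn α₁ α₂ n)) ^ q * μ (Qb n)
        ≤ cA ^ q * ENNReal.ofReal C₀ *
            ((Nn α₁ α₂ g n) ^ p * (Dn α₁ α₂ n) ^ (1 - p)) ^ (q / p) := by
    intro n
    have hμn : μ (Qb n) ≤ ENNReal.ofReal C₀ * (Dn α₁ α₂ n) ^ (q / p) := by
      have h := hcarl (dlo n.1) (dhi n.1) (dlo n.2) (dhi n.2)
        (dlo_lt_dhi n.1) (dlo_lt_dhi n.2)
      rw [Dn_eq]
      unfold Qb dSq
      exact h
    have hD0 := Dn_ne_zero hα₁ hα₂ n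
    have hDt := Dn_ne_top hα₁ hα₂ n
    have havg : ((Nn α₁ α₂ g n / Dn α₁ α₂ n) ^ p) * Dn α₁ α₂ n
        = (Nn α₁ α₂ g n) ^ p * (Dn α₁ α₂ n) ^ (1 - p) := by
      have hDD : (Dn α₁ α₂ n) ^ (-p) * Dn α₁ α₂ n = (Dn α₁ α₂ n) ^ (1 - p) := by
        nth_rewrite 2 [← ENNReal.rpow_one (Dn α₁ α₂ n)]
        rw [← ENNReal.rpow_add _ _ hD0 hDt, show -p + 1 = 1 - p by ring]
      rw [ENNReal.div_rpow_of_nonneg _ _ hp0.le, div_eq_mul_inv, ← ENNReal.rpow_neg,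
        mul_assoc, hDD]
    have hqq : p * (q / p) = q := by field_simp
    calc (cA * (Nn α₁ α₂ g n / Dn α₁ α₂ n)) ^ q * μ (Qb n)
        ≤ (cA * (Nn α₁ α₂ g n / Dn α₁ α₂ n)) ^ q *
            (ENNReal.ofReal C₀ * (Dn α₁ α₂ n) ^ (q / p)) := mul_le_mul_right hμn _
      _ = cA ^ q * ENNReal.ofReal C₀ *
            (((Nn α₁ α₂ g n / Dn α₁ α₂ n) ^ p * Dn α₁ α₂ n) ^ (q / p)) := by
          rw [ENNReal.mul_rpow_of_nonneg _ _ hq0.le,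
            ENNReal.mul_rpow_of_nonneg _ _ (by positivity : (0:ℝ) ≤ q / p),
            show (Nn α₁ α₂ g n / Dn α₁ α₂ n) ^ q
              = ((Nn α₁ α₂ g n / Dn α₁ α₂ n) ^ p) ^ (q / p) from by
                rw [← ENNReal.rpow_mul, hqq]]
          ring
      _ = cA ^ q * ENNReal.ofReal C₀ *
            ((Nn α₁ α₂ g n) ^ p * (Dn α₁ α₂ n) ^ (1 - p)) ^ (q / p) := by rw [havg]
  -- assemble
  have hfinal : (∫⁻ z in UHP ×ˢ UHP, (strongMaxFn α₁ α₂ f' z) ^ q ∂μ)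
      ≤ K * (∫⁻ w, (g w) ^ p ∂((Vm α₁).prod (Vm α₂))) ^ (q / p) := by
    calc (∫⁻ z in UHP ×ˢ UHP, (strongMaxFn α₁ α₂ f' z) ^ q ∂μ)
        ≤ ∑' n : (ℤ × ℤ) × (ℤ × ℤ),
            (cA * (Nn α₁ α₂ g n / Dn α₁ α₂ n)) ^ q * μ (Qb n) := hstep2
      _ ≤ ∑' n : (ℤ × ℤ) × (ℤ × ℤ), cA ^ q * ENNReal.ofReal C₀ *
            ((Nn α₁ α₂ g n) ^ p * (Dn α₁ α₂ n) ^ (1 - p)) ^ (q / p) :=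
          Summable.tsum_le_tsum hstep3 ENNReal.summable ENNReal.summable
      _ = cA ^ q * ENNReal.ofReal C₀ * ∑' n : (ℤ × ℤ) × (ℤ × ℤ),
            ((Nn α₁ α₂ g n) ^ p * (Dn α₁ α₂ n) ^ (1 - p)) ^ (q / p) :=
          ENNReal.tsum_mul_left
      _ ≤ cA ^ q * ENNReal.ofReal C₀ * (∑' n : (ℤ × ℤ) × (ℤ × ℤ),
            (Nn α₁ α₂ g n) ^ p * (Dn α₁ α₂ n) ^ (1 - p)) ^ (q / p) :=
          mul_le_mul_right (tsum_rpow_le _ hqp1) _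
      _ ≤ cA ^ q * ENNReal.ofReal C₀ *
            ((CL α₁ p * CL α₂ p) * ∫⁻ w, (g w) ^ p ∂((Vm α₁).prod (Vm α₂))) ^ (q / p) :=
          mul_le_mul_right
            (ENNReal.rpow_le_rpow (biparam hα₁ hα₂ hp g hgmeas) (by positivity)) _
      _ = K * (∫⁻ w, (g w) ^ p ∂((Vm α₁).prod (Vm α₂))) ^ (q / p) := by
          rw [hKdef, ENNReal.mul_rpow_of_nonneg _ _ (by positivity : (0:ℝ) ≤ q / p)]
          ring
  calc (∫⁻ z in UHP ×ˢ UHP, (strongMaxFn α₁ α₂ f z) ^ q ∂μ)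
      = ∫⁻ z in UHP ×ˢ UHP, (strongMaxFn α₁ α₂ f' z) ^ q ∂μ :=
        lintegral_congr fun z => by rw [hsm z]
    _ ≤ K * (∫⁻ w, (g w) ^ p ∂((Vm α₁).prod (Vm α₂))) ^ (q / p) := hfinal
    _ = K * (∫⁻ z, (‖f z‖₊ : ℝ≥0∞) ^ p ∂((Vm α₁).prod (Vm α₂))) ^ (q / p) := by
        rw [hrhs]
    _ ≤ ENNReal.ofReal (K.toReal + 1) *
          (∫⁻ z, (‖f z‖₊ : ℝ≥0∞) ^ p ∂((Vm α₁).prod (Vm α₂))) ^ (q / p) := by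
        refine mul_le_mul_left ?_ _
        conv_lhs => rw [← ENNReal.ofReal_toReal hKtop]
        exact ENNReal.ofReal_le_ofReal (by linarith [ENNReal.toReal_nonneg (a := K)])
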